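/- arXiv:2006.08501 — 2 statements merged into one kernel-verified Lean document; each statement's English description precedes it below -/
import Mathlib

section
/- Let H be a complex Hilbert space and let B ⊆ B(H) be a unital closed *-subalgebra acting irreducibly on H, i.e., the only bounded operators on H commuting with every element of B are the scalar multiples of the identity. Then the identity map id : B → B is pure in the cone CP(B, B) of completely positive linear maps: whenever ϑ, ω : B → B are completely positive linear maps with ϑ + ω = id, there exists s ∈ [0,1] such that ϑ = s·id and ω = (1−s)·id. (This is the key step in the proof that the identity map on an AW*-factor is pure.) -/
open scoped ComplexOrder InnerProductSpace

/-- An `m × m` matrix of operators on a Hilbert space `H` is positive if the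
corresponding operator on the direct sum `H^{⊕m}` is positive, i.e. its quadratic
form is nonnegative. -/
def OpMatPos {H : Type*} [NormedAddCommGroup H] [InnerProductSpace ℂ H] {m : ℕ}
    (x : Fin m → Fin m → (H →L[ℂ] H)) : Prop :=
  ∀ v : Fin m → H, 0 ≤ ∑ i, ∑ j, ⟪x i j (v j), v i⟫_ℂ

/-- Complete positivity for a linear map from a subspace `S ⊆ B(H)` into `B(H)`:
positive `m × m` operator matrices with entries in `S` are sent (entrywise) to
positive operator matrices. -/
def IsCPop {H : Type*} [NormedAddCommGroup H] [InnerProductSpace ℂ H]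
    (S : Submodule ℂ (H →L[ℂ] H)) (φ : S →ₗ[ℂ] (H →L[ℂ] H)) : Prop :=
  ∀ (m : ℕ) (x : Fin m → Fin m → S),
    OpMatPos (fun i j => (x i j : H →L[ℂ] H)) →
    OpMatPos (fun i j => φ (x i j))

section Aux

open ContinuousLinearMap

lemma aux_real_key (k n : ℝ) (hk : 0 ≤ k) (hn : 0 ≤ n)
    (h : ∀ ε : ℝ, 0 < ε → 2 * (ε * k) ≤ ε ^ 2 * k * n) : k = 0 := by
  have hden : (0:ℝ) < n + 1 := by linarith
  have hε : (0:ℝ) < 1 / (n + 1) := one_div_pos.mpr hden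
  have h2 := h _ hε
  have h3 : (n+1)^2 * (2 * (1/(n+1) * k)) ≤ (n+1)^2 * ((1/(n+1))^2 * k * n) :=
    mul_le_mul_of_nonneg_left h2 (by positivity)
  have e3 : (n+1)^2 * (2 * (1/(n+1) * k)) = 2 * (n+1) * k := by
    field_simp
  have e4 : (n+1)^2 * ((1/(n+1))^2 * k * n) = k * n := by
    field_simp
  rw [e3, e4] at h3
  nlinarith

lemma aux_key_complex (A Y Z C N : ℂ) (hC : 0 ≤ C) (hN : 0 ≤ N)
    (h0 : ∀ t : ℂ, 0 ≤ A + t * Y + (starRingEnd ℂ) t * Z + (starRingEnd ℂ) t * t * C)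
    (h1 : ∀ t : ℂ, A + t * Y + (starRingEnd ℂ) t * Z + (starRingEnd ℂ) t * t * C
            ≤ (starRingEnd ℂ) t * t * N) :
    Y = 0 ∧ Z = 0 := by
  rw [Complex.le_def] at hC hN
  simp only [Complex.zero_re, Complex.zero_im] at hC hN
  obtain ⟨hCre, hCim⟩ := hC
  obtain ⟨hNre, hNim⟩ := hN
  have hA : A = 0 := by
    have g0 := h0 0
    have g1 := h1 0
    simp at g0 g1
    exact le_antisymm g1 g0
  subst hA
  have e1 := (Complex.le_def.mp (h1 1)).2
  have e2 := (Complex.le_def.mp (h1 Complex.I)).2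
  simp [Complex.add_im, Complex.mul_im, Complex.mul_re, ← hCim, ← hNim] at e1 e2
  have hZre : Z.re = Y.re := by linarith
  have hZim : Z.im = -Y.im := by linarith
  have hKnn : (0:ℝ) ≤ Y.re ^ 2 + Y.im ^ 2 := by positivity
  have hgen : ∀ ε : ℝ, 0 < ε →
      2 * (ε * (Y.re ^ 2 + Y.im ^ 2)) ≤ ε ^ 2 * (Y.re ^ 2 + Y.im ^ 2) * N.re := by
    intro ε hεpos
    have h := (Complex.le_def.mp (h1 ((ε : ℂ) * (starRingEnd ℂ) Y))).1
    simp only [Complex.add_re, Complex.mul_re, Complex.mul_im, Complex.conj_re, Complex.conj_im,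
      Complex.ofReal_re, Complex.ofReal_im, hZre, hZim, ← hCim, ← hNim, Complex.zero_re,
      mul_zero, zero_mul, sub_zero, add_zero, zero_add, neg_zero] at h
    nlinarith [h, mul_nonneg (mul_nonneg (mul_pos hεpos hεpos).le hKnn) hCre]
  have hKz : Y.re ^ 2 + Y.im ^ 2 = 0 := aux_real_key _ _ hKnn hNre hgen
  have hYre : Y.re = 0 := by nlinarith [sq_nonneg Y.re, sq_nonneg Y.im]
  have hYim : Y.im = 0 := by nlinarith [sq_nonneg Y.re, sq_nonneg Y.im]
  have hY : Y = 0 := Complex.ext hYre hYim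
  refine ⟨hY, Complex.ext ?_ ?_⟩ <;> simp [hZre, hZim, hYre, hYim]

variable {H : Type*} [NormedAddCommGroup H] [InnerProductSpace ℂ H] [CompleteSpace H]

lemma aux_gram_sum_eq {m : ℕ} (c : Fin m → (H →L[ℂ] H)) (v : Fin m → H) :
    ∑ i, ∑ j, ⟪(star (c i) * (c j)) (v j), v i⟫_ℂ
      = ⟪∑ j, c j (v j), ∑ i, c i (v i)⟫_ℂ := by
  simp_rw [inner_sum, sum_inner, ContinuousLinearMap.mul_apply, star_eq_adjoint, adjoint_inner_left]

omit [CompleteSpace H] in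
lemma aux_inner_self_nonneg (w : H) : (0:ℂ) ≤ ⟪w, w⟫_ℂ := by
  rw [inner_self_eq_norm_sq_to_K]
  norm_cast
  exact Complex.zero_le_real.mpr (sq_nonneg _)

lemma aux_gram_opMatPos {m : ℕ} (c : Fin m → (H →L[ℂ] H)) :
    OpMatPos (fun i j => star (c i) * c j) := fun v => by
  rw [aux_gram_sum_eq]; exact aux_inner_self_nonneg _

/-- the element `star x * y` of the subalgebra, as an element of the submodule -/
noncomputable def spB (B : StarSubalgebra ℂ (H →L[ℂ] H))
    (x y : Subalgebra.toSubmodule B.toSubalgebra) :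
    Subalgebra.toSubmodule B.toSubalgebra :=
  ⟨star x.1 * y.1, by
    have hx : x.1 ∈ B := by
      have := x.2; rwa [Subalgebra.mem_toSubmodule, StarSubalgebra.mem_toSubalgebra] at this
    have hy : y.1 ∈ B := by
      have := y.2; rwa [Subalgebra.mem_toSubmodule, StarSubalgebra.mem_toSubalgebra] at this
    rw [Subalgebra.mem_toSubmodule, StarSubalgebra.mem_toSubalgebra]
    exact mul_mem (star_mem hx) hy⟩

/-- the unit, as an element of the submodule -/
noncomputable def eB (B : StarSubalgebra ℂ (H →L[ℂ] H)) : Subalgebra.toSubmodule B.toSubalgebra :=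
  ⟨1, by rw [Subalgebra.mem_toSubmodule]; exact one_mem B.toSubalgebra⟩

@[simp] lemma spB_coe (B : StarSubalgebra ℂ (H →L[ℂ] H))
    (x y : Subalgebra.toSubmodule B.toSubalgebra) :
    (spB B x y).1 = star x.1 * y.1 := rfl

@[simp] lemma eB_coe (B : StarSubalgebra ℂ (H →L[ℂ] H)) : (eB B).1 = 1 := rfl

lemma spB_e_left (B : StarSubalgebra ℂ (H →L[ℂ] H))
    (a : Subalgebra.toSubmodule B.toSubalgebra) : spB B (eB B) a = a :=
  Subtype.ext (by simp)

lemma spB_e_e (B : StarSubalgebra ℂ (H →L[ℂ] H)) : spB B (eB B) (eB B) = eB B :=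
  spB_e_left B (eB B)

end Aux

set_option maxHeartbeats 1000000 in
/-- If `B ⊆ B(H)` is a unital closed *-subalgebra acting irreducibly on `H`, then the
identity map of `B` is pure in the cone `CP(B, B)`.  (Maps `B → B` are formalised as
maps `B → B(H)` whose values lie in `B`; the identity map is the inclusion
`B.toSubalgebra.toSubmodule.subtype`.) -/
theorem identity_map_on_irreducible_cstar_algebra_is_pure
    {H : Type*} [NormedAddCommGroup H] [InnerProductSpace ℂ H] [CompleteSpace H]
    (B : StarSubalgebra ℂ (H →L[ℂ] H)) (hBclosed : IsClosed (B : Set (H →L[ℂ] H)))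
    (hirr : ∀ c : H →L[ℂ] H, (∀ b ∈ B, c * b = b * c) → ∃ lam : ℂ, c = lam • 1) :
    ∀ ϑ ω : B.toSubalgebra.toSubmodule →ₗ[ℂ] (H →L[ℂ] H),
      IsCPop B.toSubalgebra.toSubmodule ϑ → IsCPop B.toSubalgebra.toSubmodule ω →
      (∀ x, ϑ x ∈ B) → (∀ x, ω x ∈ B) →
      ϑ + ω = (Subalgebra.toSubmodule B.toSubalgebra).subtype →
      ∃ s : ℝ, 0 ≤ s ∧ s ≤ 1 ∧
        ϑ = (s : ℂ) • (Subalgebra.toSubmodule B.toSubalgebra).subtype ∧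
        ω = ((1 - s : ℝ) : ℂ) • (Subalgebra.toSubmodule B.toSubalgebra).subtype := by
  intro ϑ ω hϑ hω hϑB hωB hsum
  rcases subsingleton_or_nontrivial H with hH | hH
  · have hsub : Subsingleton (H →L[ℂ] H) :=
      ⟨fun f g => ContinuousLinearMap.ext fun v => Subsingleton.elim _ _⟩
    exact ⟨0, le_refl 0, zero_le_one,
      LinearMap.ext fun x => Subsingleton.elim _ _,
      LinearMap.ext fun x => Subsingleton.elim _ _⟩
  -- pointwise form of the sum hypothesis
  have hsum' : ∀ x : Subalgebra.toSubmodule B.toSubalgebra, ϑ x + ω x = x.1 := by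
    intro x
    have := LinearMap.congr_fun hsum x
    simpa using this
  -- complete positivity applied to Gram matrices
  have cpgram : ∀ (φ : Subalgebra.toSubmodule B.toSubalgebra →ₗ[ℂ] (H →L[ℂ] H)),
      IsCPop B.toSubalgebra.toSubmodule φ →
      ∀ (m : ℕ) (c : Fin m → Subalgebra.toSubmodule B.toSubalgebra) (v : Fin m → H),
      0 ≤ ∑ i, ∑ j, ⟪φ (spB B (c i) (c j)) (v j), v i⟫_ℂ := by
    intro φ hφ m c v
    exact hφ m (fun i j => spB B (c i) (c j)) (aux_gram_opMatPos (fun i => (c i).1)) v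
  -- the key identity : ϑ a = ϑ e ∘ a  and  ϑ (star a) = star a ∘ ϑ e
  have main : ∀ (a : Subalgebra.toSubmodule B.toSubalgebra) (ξ η : H),
      ⟪ϑ a ξ, η⟫_ℂ = ⟪ϑ (eB B) (a.1 ξ), η⟫_ℂ ∧
      ⟪ϑ (spB B a (eB B)) η, ξ⟫_ℂ = ⟪ϑ (eB B) η, a.1 ξ⟫_ℂ := by
    intro a ξ η
    set c : Fin 3 → Subalgebra.toSubmodule B.toSubalgebra := ![a, eB B, eB B] with hc
    set vv : ℂ → Fin 3 → H := fun t => ![ξ, -(a.1 ξ), t • η] with hvv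
    set A : ℂ := ⟪ϑ (spB B a a) ξ, ξ⟫_ℂ - ⟪ϑ (spB B a (eB B)) (a.1 ξ), ξ⟫_ℂ
        - ⟪ϑ a ξ, a.1 ξ⟫_ℂ + ⟪ϑ (eB B) (a.1 ξ), a.1 ξ⟫_ℂ with hA
    set Y : ℂ := ⟪ϑ a ξ, η⟫_ℂ - ⟪ϑ (eB B) (a.1 ξ), η⟫_ℂ with hY
    set Z : ℂ := ⟪ϑ (spB B a (eB B)) η, ξ⟫_ℂ - ⟪ϑ (eB B) η, a.1 ξ⟫_ℂ with hZ
    set C : ℂ := ⟪ϑ (eB B) η, η⟫_ℂ with hC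
    set N : ℂ := ⟪η, η⟫_ℂ with hN
    have hexp : ∀ t : ℂ,
        ∑ i, ∑ j, ⟪ϑ (spB B (c i) (c j)) (vv t j), vv t i⟫_ℂ
          = A + t * Y + (starRingEnd ℂ) t * Z + (starRingEnd ℂ) t * t * C := by
      intro t
      simp only [hc, hvv, Fin.sum_univ_three, Matrix.cons_val_zero, Matrix.cons_val_one,
        Matrix.head_cons, Matrix.cons_val_two, Matrix.tail_cons, spB_e_left, spB_e_e,
        map_neg, map_smul, inner_neg_left, inner_neg_right, inner_smul_left, inner_smul_right,
        ContinuousLinearMap.neg_apply, ContinuousLinearMap.smul_apply]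
      rw [hA, hY, hZ, hC]
      ring
    have hFpos : ∀ t : ℂ,
        0 ≤ A + t * Y + (starRingEnd ℂ) t * Z + (starRingEnd ℂ) t * t * C := by
      intro t
      rw [← hexp t]
      exact cpgram ϑ hϑ 3 c (vv t)
    have hFle : ∀ t : ℂ,
        A + t * Y + (starRingEnd ℂ) t * Z + (starRingEnd ℂ) t * t * C
          ≤ (starRingEnd ℂ) t * t * N := by
      intro t
      have hG := cpgram ω hω 3 c (vv t)
      have hFG : (∑ i, ∑ j, ⟪ϑ (spB B (c i) (c j)) (vv t j), vv t i⟫_ℂ)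
          + (∑ i, ∑ j, ⟪ω (spB B (c i) (c j)) (vv t j), vv t i⟫_ℂ)
          = (starRingEnd ℂ) t * t * N := by
        rw [← Finset.sum_add_distrib]
        simp_rw [← Finset.sum_add_distrib, ← inner_add_left,
          ← ContinuousLinearMap.add_apply]
        have hptw : ∀ i j : Fin 3,
            (ϑ (spB B (c i) (c j)) + ω (spB B (c i) (c j))) (vv t j)
              = (star (c i).1 * (c j).1) (vv t j) := by
          intro i j
          rw [hsum' (spB B (c i) (c j)), spB_coe]
        simp_rw [hptw]
        rw [aux_gram_sum_eq]
        have hw : ∑ j, (c j).1 (vv t j) = t • η := by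
          simp [hc, hvv, Fin.sum_univ_three]
        rw [hw]
        rw [inner_smul_left, inner_smul_right, hN]
        ring
      rw [← hexp t]
      calc (∑ i, ∑ j, ⟪ϑ (spB B (c i) (c j)) (vv t j), vv t i⟫_ℂ)
          ≤ (∑ i, ∑ j, ⟪ϑ (spB B (c i) (c j)) (vv t j), vv t i⟫_ℂ)
            + (∑ i, ∑ j, ⟪ω (spB B (c i) (c j)) (vv t j), vv t i⟫_ℂ) :=
            le_add_of_nonneg_right hG
        _ = (starRingEnd ℂ) t * t * N := hFG
    have hCpos : (0:ℂ) ≤ C := by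
      have := cpgram ϑ hϑ 1 ![eB B] ![η]
      simpa [Fin.sum_univ_one, spB_e_e, hC] using this
    have hNpos : (0:ℂ) ≤ N := aux_inner_self_nonneg η
    obtain ⟨hY0, hZ0⟩ := aux_key_complex A Y Z C N hCpos hNpos hFpos hFle
    constructor
    · have := sub_eq_zero.mp (hY ▸ hY0)
      exact this
    · have := sub_eq_zero.mp (hZ ▸ hZ0)
      exact this
  -- consequences of the key identity
  have hϑa : ∀ a : Subalgebra.toSubmodule B.toSubalgebra, ϑ a = ϑ (eB B) * a.1 := by
    intro a
    ext ξ
    apply ext_inner_right ℂ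
    intro η
    rw [ContinuousLinearMap.mul_apply]
    exact (main a ξ η).1
  have hϑstar : ∀ a : Subalgebra.toSubmodule B.toSubalgebra,
      ϑ (spB B a (eB B)) = star a.1 * ϑ (eB B) := by
    intro a
    ext η
    apply ext_inner_right ℂ
    intro ξ
    rw [ContinuousLinearMap.mul_apply, ContinuousLinearMap.star_eq_adjoint,
      ContinuousLinearMap.adjoint_inner_left]
    exact (main a ξ η).2
  -- ϑ (eB B) commutes with B
  have hcomm : ∀ b ∈ B, (ϑ (eB B)) * b = b * (ϑ (eB B)) := by
    intro b hb
    have hbS : b ∈ Subalgebra.toSubmodule B.toSubalgebra := by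
      rw [Subalgebra.mem_toSubmodule]; exact hb
    have hbS' : star b ∈ Subalgebra.toSubmodule B.toSubalgebra := by
      rw [Subalgebra.mem_toSubmodule]; exact star_mem (s := B) hb
    set a : Subalgebra.toSubmodule B.toSubalgebra := ⟨b, hbS⟩ with ha
    set a' : Subalgebra.toSubmodule B.toSubalgebra := ⟨star b, hbS'⟩ with ha'
    have h1 : ϑ a = ϑ (eB B) * b := hϑa a
    have h2 : spB B a' (eB B) = a := by
      apply Subtype.ext
      simp [ha, ha']
    have h3 : ϑ a = b * ϑ (eB B) := by
      rw [← h2, hϑstar a']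
      simp [ha']
    rw [← h1, h3]
  obtain ⟨lam, hlam⟩ := hirr (ϑ (eB B)) hcomm
  -- positivity of ϑ(1) and ω(1) on vectors
  have hϑpos : ∀ η : H, (0:ℂ) ≤ ⟪ϑ (eB B) η, η⟫_ℂ := by
    intro η
    have := cpgram ϑ hϑ 1 ![eB B] ![η]
    simpa [Fin.sum_univ_one, spB_e_e] using this
  have hωpos : ∀ η : H, (0:ℂ) ≤ ⟪ω (eB B) η, η⟫_ℂ := by
    intro η
    have := cpgram ω hω 1 ![eB B] ![η]
    simpa [Fin.sum_univ_one, spB_e_e] using this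
  obtain ⟨η₀, hη₀⟩ := exists_ne (0 : H)
  have hr : (0:ℝ) < ‖η₀‖ ^ 2 := pow_pos (norm_pos_iff.mpr hη₀) 2
  have hinner : ⟪η₀, η₀⟫_ℂ = ((‖η₀‖ ^ 2 : ℝ) : ℂ) := by
    rw [inner_self_eq_norm_sq_to_K]; norm_cast
  -- extract that lam is real, between 0 and 1
  have hlam_eval : ⟪ϑ (eB B) η₀, η₀⟫_ℂ = (starRingEnd ℂ) lam * ((‖η₀‖ ^ 2 : ℝ) : ℂ) := by
    rw [hlam]
    simp only [ContinuousLinearMap.smul_apply, ContinuousLinearMap.one_apply,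
      inner_smul_left]
    rw [hinner]
  have hlam_re : 0 ≤ lam.re ∧ lam.im = 0 := by
    have h := hϑpos η₀
    rw [hlam_eval, Complex.le_def] at h
    obtain ⟨h1, h2⟩ := h
    simp only [Complex.mul_re, Complex.mul_im, Complex.conj_re, Complex.conj_im,
      ← Complex.ofReal_pow, Complex.ofReal_re, Complex.ofReal_im, Complex.zero_re,
      Complex.zero_im, mul_zero, zero_mul, add_zero, zero_add, sub_zero, neg_zero,
      neg_mul] at h1 h2
    constructor
    · by_contra hcon
      push_neg at hcon
      have : lam.re * ‖η₀‖ ^ 2 < 0 := mul_neg_of_neg_of_pos hcon hr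
      nlinarith [h1]
    · have h2' : lam.im * ‖η₀‖ ^ 2 = 0 := by nlinarith [h2]
      exact (mul_eq_zero.mp h2').resolve_right (by positivity)
  -- ω(1) = (1 - lam) • 1
  have hωe : ω (eB B) = (1 - lam) • (1 : H →L[ℂ] H) := by
    have := hsum' (eB B)
    rw [eB_coe, hlam] at this
    have h2 : ω (eB B) = 1 - lam • (1 : H →L[ℂ] H) := eq_sub_of_add_eq' this
    rw [h2, sub_smul, one_smul]
  have hlam_le : lam.re ≤ 1 := by
    have h := hωpos η₀
    rw [hωe] at h
    simp only [ContinuousLinearMap.smul_apply, ContinuousLinearMap.one_apply,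
      inner_smul_left] at h
    rw [hinner, Complex.le_def] at h
    obtain ⟨h1, h2⟩ := h
    simp only [Complex.mul_re, Complex.mul_im, Complex.conj_re, Complex.conj_im,
      Complex.sub_re, Complex.sub_im, Complex.one_re, Complex.one_im,
      ← Complex.ofReal_pow, Complex.ofReal_re, Complex.ofReal_im, Complex.zero_re,
      Complex.zero_im, mul_zero, zero_mul, add_zero, zero_add, sub_zero, neg_zero,
      neg_mul] at h1 h2
    by_contra hcon
    push_neg at hcon
    have hneg : 1 - lam.re < 0 := by linarith
    have : (1 - lam.re) * ‖η₀‖ ^ 2 < 0 := mul_neg_of_neg_of_pos hneg hr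
    nlinarith [h1]
  -- wrap up
  have hlam_eq : lam = ((lam.re : ℝ) : ℂ) := by
    apply Complex.ext
    · simp
    · simp [hlam_re.2]
  refine ⟨lam.re, hlam_re.1, hlam_le, ?_, ?_⟩
  · apply LinearMap.ext
    intro x
    rw [LinearMap.smul_apply, Submodule.subtype_apply]
    rw [hϑa x, hlam, ← hlam_eq]
    rw [smul_mul_assoc, one_mul]
  · apply LinearMap.ext
    intro x
    rw [LinearMap.smul_apply, Submodule.subtype_apply]
    have hx := hsum' x
    have hϑx : ϑ x = lam • x.1 := by
      rw [hϑa x, hlam, smul_mul_assoc, one_mul]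
    rw [hϑx] at hx
    have hωx : ω x = x.1 - lam • x.1 := eq_sub_of_add_eq' hx
    rw [hωx]
    rw [show ((1 - lam.re : ℝ) : ℂ) = 1 - lam by
      rw [hlam_eq]; push_cast; simp]
    rw [sub_smul, one_smul]
end

section
/- Let H be a complex Hilbert space and let M ⊆ B(H) be a von Neumann algebra (a unital *-subalgebra of B(H) equal to its double commutant) which is a factor, i.e., the centre M ∩ M′ consists only of scalar multiples of the identity. Then the identity map id : M → M is pure in the cone CP(M, M) of completely positive linear maps. (This is an instance of the lemma that the identity map on any AW*-factor is pure, since every von Neumann factor is an AW*-factor.) -/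
open scoped ComplexOrder InnerProductSpace
set_option maxHeartbeats 1000000

lemma inner_self_nonneg_complex {H : Type*} [NormedAddCommGroup H] [InnerProductSpace ℂ H]
    (u : H) : (0:ℂ) ≤ ⟪u, u⟫_ℂ := by
  refine Complex.le_def.2 ⟨?_, ?_⟩
  · simpa using inner_self_nonneg (𝕜 := ℂ) (x := u)
  · have := inner_self_im (𝕜 := ℂ) u
    simp only [Complex.zero_im]
    exact this.symm

lemma posMat {H : Type*} [NormedAddCommGroup H] [InnerProductSpace ℂ H] [CompleteSpace H]
    {m : ℕ} (A : Fin m → (H →L[ℂ] H)) :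
    OpMatPos (fun i j => star (A i) * A j) := by
  intro v
  have key : ∀ i j, ⟪(star (A i) * A j) (v j), v i⟫_ℂ = ⟪A j (v j), A i (v i)⟫_ℂ := by
    intro i j
    rw [ContinuousLinearMap.star_eq_adjoint, ContinuousLinearMap.mul_apply,
      ContinuousLinearMap.adjoint_inner_left]
  simp only [key]
  have : ∑ i, ∑ j, ⟪A j (v j), A i (v i)⟫_ℂ = ⟪∑ j, A j (v j), ∑ i, A i (v i)⟫_ℂ := by
    rw [sum_inner]; simp_rw [inner_sum]; rw [Finset.sum_comm]
  rw [this]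
  exact inner_self_nonneg_complex _

lemma scalarKey (B B' C : ℂ) (hC : 0 ≤ C)
    (h : ∀ t : ℂ, 0 ≤ (starRingEnd ℂ) t * B' + t * B + (starRingEnd ℂ) t * t * C) :
    B = 0 ∧ B' = 0 := by
  have hCim : C.im = 0 := (Complex.le_def.1 hC).2.symm
  have hCre : 0 ≤ C.re := (Complex.le_def.1 hC).1
  have h1 := Complex.le_def.1 (h 1)
  have hI := Complex.le_def.1 (h Complex.I)
  have him1 : B'.im = -B.im := by
    have := h1.2; simp [Complex.add_im, Complex.mul_im, hCim] at this ⊢; linarith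
  have him2 : B'.re = B.re := by
    have := hI.2
    simp [Complex.add_im, Complex.mul_im, Complex.mul_re, hCim, Complex.conj_re, Complex.conj_im] at this
    linarith
  set s : ℝ := 1 / (C.re + 1) with hs
  have hspos : 0 < s := by positivity
  have h3re := (Complex.le_def.1 (h (-(s:ℂ) * (starRingEnd ℂ) B))).1
  simp only [Complex.add_re, Complex.mul_re, Complex.mul_im, Complex.conj_re, Complex.conj_im,
      hCim, Complex.neg_re, Complex.neg_im, Complex.ofReal_re, Complex.ofReal_im,
      him1, him2, Complex.zero_re] at h3re
  have hsC : s * C.re < 2 := by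
    rw [hs, div_mul_eq_mul_div, one_mul, div_lt_iff₀ (by linarith)]; linarith
  have hBsq : B.re^2 + B.im^2 ≤ 0 := by
    by_contra hP
    push_neg at hP
    have hneg : s*(B.re^2+B.im^2)*(s*C.re-2) < 0 :=
      mul_neg_of_pos_of_neg (mul_pos hspos hP) (by linarith)
    nlinarith [h3re, hneg]
  have hB : B = 0 := by
    have e1 : B.re = 0 := by nlinarith [sq_nonneg B.re, sq_nonneg B.im]
    have e2 : B.im = 0 := by nlinarith [sq_nonneg B.re, sq_nonneg B.im]
    exact Complex.ext e1 e2
  refine ⟨hB, ?_⟩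
  rw [hB] at him1 him2
  simp only [Complex.zero_re, Complex.zero_im, neg_zero] at him1 him2
  exact Complex.ext him2 him1

/-- The identity map on a von Neumann factor `M ⊆ B(H)` is pure in the cone `CP(M, M)`.
(Maps `M → M` are formalised as maps `M → B(H)` whose values lie in `M`; the identity map
is the inclusion of `M`, and the factor condition says the centre of `M` is trivial.) -/
theorem identity_map_on_vonNeumann_factor_is_pure
    {H : Type*} [NormedAddCommGroup H] [InnerProductSpace ℂ H] [CompleteSpace H]
    (M : VonNeumannAlgebra H)
    (hfactor : ∀ c : H →L[ℂ] H, c ∈ M → (∀ y ∈ M, c * y = y * c) →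
      ∃ lam : ℂ, c = lam • 1) :
    ∀ ϑ ω : (Subalgebra.toSubmodule M.toStarSubalgebra.toSubalgebra) →ₗ[ℂ] (H →L[ℂ] H),
      IsCPop (Subalgebra.toSubmodule M.toStarSubalgebra.toSubalgebra) ϑ →
      IsCPop (Subalgebra.toSubmodule M.toStarSubalgebra.toSubalgebra) ω →
      (∀ x, ϑ x ∈ M) → (∀ x, ω x ∈ M) →
      ϑ + ω = (Subalgebra.toSubmodule M.toStarSubalgebra.toSubalgebra).subtype →
      ∃ s : ℝ, 0 ≤ s ∧ s ≤ 1 ∧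
        ϑ = (s : ℂ) • (Subalgebra.toSubmodule M.toStarSubalgebra.toSubalgebra).subtype ∧
        ω = ((1 - s : ℝ) : ℂ) • (Subalgebra.toSubmodule M.toStarSubalgebra.toSubalgebra).subtype := by
  intro ϑ ω hϑ hω hϑM hωM hsum
  have memIff : ∀ w : H →L[ℂ] H,
      w ∈ Subalgebra.toSubmodule M.toStarSubalgebra.toSubalgebra ↔ w ∈ M := fun w => Iff.rfl
  let oneS : Subalgebra.toSubmodule M.toStarSubalgebra.toSubalgebra := ⟨1, (memIff 1).2 (one_mem M)⟩
  let starS : ∀ _ : Subalgebra.toSubmodule M.toStarSubalgebra.toSubalgebra,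
      Subalgebra.toSubmodule M.toStarSubalgebra.toSubalgebra :=
    fun z => ⟨star (z : H →L[ℂ] H), (memIff _).2 (star_mem ((memIff _).1 z.2))⟩
  let mulS : ∀ (_ _ : Subalgebra.toSubmodule M.toStarSubalgebra.toSubalgebra),
      Subalgebra.toSubmodule M.toStarSubalgebra.toSubalgebra :=
    fun z w => ⟨(z : H →L[ℂ] H) * w, (memIff _).2 (mul_mem ((memIff _).1 z.2) ((memIff _).1 w.2))⟩
  have happ : ∀ z : Subalgebra.toSubmodule M.toStarSubalgebra.toSubalgebra,
      ϑ z + ω z = (z : H →L[ℂ] H) := by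
    intro z
    have := congrArg (fun f : _ →ₗ[ℂ] (H →L[ℂ] H) => f z) hsum
    simpa using this
  -- positivity of φ(1) for CP φ
  have hOnepos : ∀ (φ : (Subalgebra.toSubmodule M.toStarSubalgebra.toSubalgebra) →ₗ[ℂ] (H →L[ℂ] H)),
      IsCPop _ φ → ∀ ζ : H, 0 ≤ ⟪φ oneS ζ, ζ⟫_ℂ := by
    intro φ hφ ζ
    have h1 := hφ 1 (fun _ _ => oneS) ?_ (fun _ => ζ)
    · simpa [Fin.sum_univ_one] using h1
    · intro v
      simpa [Fin.sum_univ_one, oneS] using inner_self_nonneg_complex (v 0)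
  -- the quadratic form inequality coming from the 3×3 matrix trick
  have quad : ∀ (φ : (Subalgebra.toSubmodule M.toStarSubalgebra.toSubalgebra) →ₗ[ℂ] (H →L[ℂ] H)),
      IsCPop _ φ → ∀ (x : Subalgebra.toSubmodule M.toStarSubalgebra.toSubalgebra) (ξ η : H) (t : ℂ),
      0 ≤ (⟪φ (mulS (starS x) x) ξ, ξ⟫_ℂ - ⟪φ (starS x) ((x : H →L[ℂ] H) ξ), ξ⟫_ℂ
            - ⟪φ x ξ, (x : H →L[ℂ] H) ξ⟫_ℂ + ⟪φ oneS ((x : H →L[ℂ] H) ξ), (x : H →L[ℂ] H) ξ⟫_ℂ)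
          + (starRingEnd ℂ) t * (⟪φ (starS x) η, ξ⟫_ℂ - ⟪φ oneS η, (x : H →L[ℂ] H) ξ⟫_ℂ)
          + t * (⟪φ x ξ, η⟫_ℂ - ⟪φ oneS ((x : H →L[ℂ] H) ξ), η⟫_ℂ)
          + (starRingEnd ℂ) t * t * ⟪φ oneS η, η⟫_ℂ := by
    intro φ hφ x ξ η t
    let X : Fin 3 → Fin 3 → Subalgebra.toSubmodule M.toStarSubalgebra.toSubalgebra :=
      ![![mulS (starS x) x, starS x, starS x], ![x, oneS, oneS], ![x, oneS, oneS]]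
    have hXpos : OpMatPos (fun i j => (X i j : H →L[ℂ] H)) := by
      have : (fun i j => (X i j : H →L[ℂ] H))
          = fun i j => star ((![ (x : H →L[ℂ] H), 1, 1]) i) * (![ (x : H →L[ℂ] H), 1, 1]) j := by
        funext i j
        fin_cases i <;> fin_cases j <;>
          simp [X, mulS, starS, oneS, Matrix.vecHead, Matrix.vecTail, mul_one, one_mul, star_one]
      rw [this]
      exact posMat _
    have h := hφ 3 X hXpos ![ξ, -((x : H →L[ℂ] H) ξ), t • η]
    simp only [Fin.sum_univ_three, Matrix.cons_val_zero, Matrix.cons_val_one, Matrix.head_cons,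
      Matrix.cons_val_two, Matrix.tail_cons, X,
      ContinuousLinearMap.map_smul, map_neg, ContinuousLinearMap.map_neg,
      inner_neg_left, inner_neg_right, inner_smul_left, inner_smul_right] at h
    convert h using 1
    ring
  -- main step: ϑ x = ϑ 1 ∘ x and ϑ (x*) = x* ∘ ϑ 1
  have main : ∀ (x : Subalgebra.toSubmodule M.toStarSubalgebra.toSubalgebra) (ξ η : H),
      (⟪ϑ x ξ, η⟫_ℂ = ⟪ϑ oneS ((x : H →L[ℂ] H) ξ), η⟫_ℂ) ∧
      (⟪ϑ (starS x) η, ξ⟫_ℂ = ⟪ϑ oneS η, (x : H →L[ℂ] H) ξ⟫_ℂ) := by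
    intro x ξ η
    set Aϑ := (⟪ϑ (mulS (starS x) x) ξ, ξ⟫_ℂ - ⟪ϑ (starS x) ((x : H →L[ℂ] H) ξ), ξ⟫_ℂ
            - ⟪ϑ x ξ, (x : H →L[ℂ] H) ξ⟫_ℂ + ⟪ϑ oneS ((x : H →L[ℂ] H) ξ), (x : H →L[ℂ] H) ξ⟫_ℂ) with hAϑdef
    set Aω := (⟪ω (mulS (starS x) x) ξ, ξ⟫_ℂ - ⟪ω (starS x) ((x : H →L[ℂ] H) ξ), ξ⟫_ℂ
            - ⟪ω x ξ, (x : H →L[ℂ] H) ξ⟫_ℂ + ⟪ω oneS ((x : H →L[ℂ] H) ξ), (x : H →L[ℂ] H) ξ⟫_ℂ) with hAωdef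
    have hid : ∀ (z : Subalgebra.toSubmodule M.toStarSubalgebra.toSubalgebra) (u w : H),
        ⟪ϑ z u, w⟫_ℂ + ⟪ω z u, w⟫_ℂ = ⟪(z : H →L[ℂ] H) u, w⟫_ℂ := by
      intro z u w
      rw [← inner_add_left, ← ContinuousLinearMap.add_apply, happ z]
    have hA0 : Aϑ + Aω = 0 := by
      have e1 := hid (mulS (starS x) x) ξ ξ
      have e2 := hid (starS x) ((x : H →L[ℂ] H) ξ) ξ
      have e3 := hid x ξ ((x : H →L[ℂ] H) ξ)
      have e4 := hid oneS ((x : H →L[ℂ] H) ξ) ((x : H →L[ℂ] H) ξ)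
      have hidA : ⟪((mulS (starS x) x : H →L[ℂ] H)) ξ, ξ⟫_ℂ
          - ⟪((starS x : H →L[ℂ] H)) ((x : H →L[ℂ] H) ξ), ξ⟫_ℂ
          - ⟪(x : H →L[ℂ] H) ξ, (x : H →L[ℂ] H) ξ⟫_ℂ
          + ⟪((oneS : H →L[ℂ] H)) ((x : H →L[ℂ] H) ξ), (x : H →L[ℂ] H) ξ⟫_ℂ = 0 := by
        simp [mulS, starS, oneS, ContinuousLinearMap.mul_apply, ContinuousLinearMap.one_apply]
      rw [hAϑdef, hAωdef]
      linear_combination e1 - e2 - e3 + e4 + hidA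
    have hAϑpos : 0 ≤ Aϑ := by simpa using quad ϑ hϑ x ξ η 0
    have hAωpos : 0 ≤ Aω := by simpa using quad ω hω x ξ η 0
    have hAϑ : Aϑ = 0 := le_antisymm (by
      have : Aϑ = -Aω := by linear_combination hA0
      rw [this]
      exact neg_nonpos_of_nonneg hAωpos) hAϑpos
    have hkey := scalarKey (⟪ϑ x ξ, η⟫_ℂ - ⟪ϑ oneS ((x : H →L[ℂ] H) ξ), η⟫_ℂ)
      (⟪ϑ (starS x) η, ξ⟫_ℂ - ⟪ϑ oneS η, (x : H →L[ℂ] H) ξ⟫_ℂ)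
      (⟪ϑ oneS η, η⟫_ℂ) (hOnepos ϑ hϑ η) ?_
    · exact ⟨sub_eq_zero.1 hkey.1, sub_eq_zero.1 hkey.2⟩
    · intro t
      have h := quad ϑ hϑ x ξ η t
      rw [← hAϑdef, hAϑ, zero_add] at h
      exact h
  -- ϑ x = c * x
  have hc1 : ∀ x : Subalgebra.toSubmodule M.toStarSubalgebra.toSubalgebra,
      ϑ x = ϑ oneS * (x : H →L[ℂ] H) := by
    intro x
    refine ContinuousLinearMap.ext fun ξ => ext_inner_right ℂ fun η => ?_
    rw [(main x ξ η).1, ContinuousLinearMap.mul_apply]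
  -- ϑ x = x * c
  have hc2 : ∀ x : Subalgebra.toSubmodule M.toStarSubalgebra.toSubalgebra,
      ϑ x = (x : H →L[ℂ] H) * ϑ oneS := by
    intro x
    have hx : ∀ y : Subalgebra.toSubmodule M.toStarSubalgebra.toSubalgebra,
        ϑ (starS y) = star (y : H →L[ℂ] H) * ϑ oneS := by
      intro y
      refine ContinuousLinearMap.ext fun η => ext_inner_right ℂ fun ξ' => ?_
      rw [ContinuousLinearMap.mul_apply, ContinuousLinearMap.star_eq_adjoint,
        ContinuousLinearMap.adjoint_inner_left]
      exact (main y ξ' η).2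
    have hss : starS (starS x) = x := Subtype.ext (star_star _)
    have := hx (starS x)
    rw [hss] at this
    rw [this]
    simp [starS, star_star]
  -- c commutes with M
  have hcomm : ∀ y ∈ M, ϑ oneS * y = y * ϑ oneS := by
    intro y hy
    have h1 := hc1 ⟨y, (memIff y).2 hy⟩
    have h2 := hc2 ⟨y, (memIff y).2 hy⟩
    rw [h1] at h2
    exact h2
  obtain ⟨lam, hlam⟩ := hfactor (ϑ oneS) (hϑM oneS) hcomm
  -- positivity bounds for lam
  by_cases hH : ∀ ξ : H, ξ = 0
  · refine ⟨0, le_refl 0, zero_le_one, ?_, ?_⟩ <;>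
    · refine LinearMap.ext fun z => ContinuousLinearMap.ext fun v => ?_
      exact (hH _).trans (hH _).symm
  · push_neg at hH
    obtain ⟨ξ₀, hξ₀⟩ := hH
    have hnorm : (0:ℝ) < ‖ξ₀‖^2 := pow_pos (norm_pos_iff.2 hξ₀) 2
    have hinn : ⟪ξ₀, ξ₀⟫_ℂ = ((‖ξ₀‖^2 : ℝ) : ℂ) := by
      rw [inner_self_eq_norm_sq_to_K]; norm_num
    have hcξ : ⟪ϑ oneS ξ₀, ξ₀⟫_ℂ = (starRingEnd ℂ) lam * ((‖ξ₀‖^2 : ℝ) : ℂ) := by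
      rw [hlam]
      simp only [ContinuousLinearMap.smul_apply, ContinuousLinearMap.one_apply,
        inner_smul_left, hinn]
    have hωone : ω oneS = (1 - lam) • (1 : H →L[ℂ] H) := by
      have := happ oneS
      have h1 : ω oneS = (oneS : H →L[ℂ] H) - ϑ oneS := by
        rw [← this]; abel
      rw [h1, hlam, sub_smul, one_smul]
    have hωξ : ⟪ω oneS ξ₀, ξ₀⟫_ℂ = (starRingEnd ℂ) (1 - lam) * ((‖ξ₀‖^2 : ℝ) : ℂ) := by
      rw [hωone]
      simp only [ContinuousLinearMap.smul_apply, ContinuousLinearMap.one_apply,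
        inner_smul_left, hinn]
    have hϑpos := hOnepos ϑ hϑ ξ₀
    have hωpos := hOnepos ω hω ξ₀
    rw [hcξ] at hϑpos
    rw [hωξ] at hωpos
    have hϑre := (Complex.le_def.1 hϑpos).1
    have hϑim := (Complex.le_def.1 hϑpos).2
    have hωre := (Complex.le_def.1 hωpos).1
    simp only [Complex.mul_re, Complex.mul_im, Complex.conj_re, Complex.conj_im,
      Complex.ofReal_re, Complex.ofReal_im, Complex.sub_re, Complex.sub_im,
      Complex.one_re, Complex.one_im, Complex.zero_re, Complex.zero_im] at hϑre hϑim hωre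
    have him : lam.im = 0 := by
      by_contra hne
      have : -lam.im * (‖ξ₀‖^2) ≠ 0 := by
        intro hz
        rcases mul_eq_zero.1 hz with h | h
        · exact hne (by linarith)
        · linarith
      apply this
      linarith [hϑim]
    have hre0 : 0 ≤ lam.re := by nlinarith [hϑre]
    have hre1 : lam.re ≤ 1 := by nlinarith [hωre]
    refine ⟨lam.re, hre0, hre1, ?_, ?_⟩
    · refine LinearMap.ext fun z => ?_
      have hz := hc1 z
      rw [hlam] at hz
      have hlam' : lam = ((lam.re : ℝ) : ℂ) := Complex.ext rfl (by simp [him])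
      rw [LinearMap.smul_apply, Submodule.subtype_apply, hz, smul_mul_assoc, one_mul, ← hlam']
    · refine LinearMap.ext fun z => ?_
      have hz : ω z = (z : H →L[ℂ] H) - ϑ z := by rw [← happ z]; abel
      have hz1 := hc1 z
      rw [hlam] at hz1
      have hlam' : lam = ((lam.re : ℝ) : ℂ) := Complex.ext rfl (by simp [him])
      rw [LinearMap.smul_apply, Submodule.subtype_apply, hz, hz1, smul_mul_assoc, one_mul,
        Complex.ofReal_sub, Complex.ofReal_one, ← hlam', sub_smul, one_smul]
end
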